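/- Let (λ_n)_{n∈ℤ} be a sequence of negative reals with λ_{n-1} = λ_n(5 - λ_n) and λ_n → -∞ as n → -∞. With c_n = 1 - λ_n/4 and s_n = (-λ_n/4)·Π_{k=0}^∞ (1 + 4/(2 - λ_{n-k})), we have lim_{n→-∞} s_n / c_n = 1. -/

import Mathlib

open Filter Real

theorem s_over_c_tendsto_one (L : ℤ → ℝ) (hLneg : ∀ n, L n < 0)
    (hLrec : ∀ n, L (n - 1) = L n * (5 - L n))
    (hLbot : Filter.Tendsto L Filter.atBot Filter.atBot) :
    Filter.Tendsto
      (fun n : ℤ =>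
        ((-(L n) / 4) * ∏' k : ℕ, (1 + 4 / (2 - L (n - k)))) / (1 - L n / 4))
      Filter.atBot (nhds 1) := by
  -- basic bound: L (n - k) ≤ 5 ^ k * L n
  have hpow : ∀ (n : ℤ) (k : ℕ), L (n - k) ≤ 5 ^ k * L n := by
    intro n k
    induction k with
    | zero => simp
    | succ k ih =>
      have h1 : (n : ℤ) - (k + 1 : ℕ) = (n - k) - 1 := by push_cast; ring
      rw [h1, hLrec]
      have h2 : L (n - k) < 0 := hLneg _
      have h3 : (0:ℝ) < 5 ^ k := by positivity
      have h5 : (5:ℝ) ^ (k + 1) = 5 * 5 ^ k := by ring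
      nlinarith [sq_nonneg (L (n - k)),
        mul_le_mul_of_nonneg_left ih (show (0:ℝ) ≤ 5 by norm_num)]
  set a : ℤ → ℕ → ℝ := fun n k => 4 / (2 - L (n - k)) with ha
  have hapos : ∀ n k, 0 < a n k := by
    intro n k
    have h := hLneg (n - k)
    have h2 : (0:ℝ) < 2 - L (n - k) := by linarith
    exact div_pos (by norm_num) h2
  have hable : ∀ n k, a n k ≤ (4 / (-L n)) * (1/5) ^ k := by
    intro n k
    have hLn : L n < 0 := hLneg n
    have h5 : (0:ℝ) < 5 ^ k := by positivity
    have hub : 5 ^ k * (-L n) ≤ 2 - L (n - k) := by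
      have := hpow n k; nlinarith
    have hpos : (0:ℝ) < 5 ^ k * (-L n) := mul_pos h5 (by linarith)
    calc a n k ≤ 4 / (5 ^ k * (-L n)) := by
          exact div_le_div_of_nonneg_left (by norm_num) hpos hub
      _ = (4 / (-L n)) * (1/5) ^ k := by
          rw [div_pow, one_pow]; field_simp
  have hgeom : ∀ n : ℤ, Summable (fun k : ℕ => (4 / (-L n)) * (1/5) ^ k) :=
    fun n => (summable_geometric_of_lt_one (by norm_num) (by norm_num)).mul_left _
  have hsum : ∀ n, Summable (a n) := fun n =>
    Summable.of_nonneg_of_le (fun k => (hapos n k).le) (hable n) (hgeom n)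
  have htsum : ∀ n, ∑' k, a n k ≤ 5 / (-L n) := by
    intro n
    have hLn : L n < 0 := hLneg n
    calc ∑' k, a n k ≤ ∑' k : ℕ, (4 / (-L n)) * (1/5) ^ k :=
          Summable.tsum_le_tsum (hable n) (hsum n) (hgeom n)
      _ = (4 / (-L n)) * (1 - 1/5)⁻¹ := by
          rw [tsum_mul_left, tsum_geometric_of_lt_one (by norm_num) (by norm_num)]
      _ = 5 / (-L n) := by field_simp; ring
  -- log summability and product identity
  have hlogsum : ∀ n, Summable (fun k => Real.log (1 + a n k)) := by
    intro n
    refine Summable.of_nonneg_of_le (fun k => Real.log_nonneg (by linarith [hapos n k]))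
      (fun k => ?_) (hsum n)
    have h1 : (0:ℝ) < 1 + a n k := by linarith [hapos n k]
    have := Real.log_le_sub_one_of_pos h1
    linarith
  have hprod : ∀ n, HasProd (fun k => 1 + a n k)
      (Real.exp (∑' k, Real.log (1 + a n k))) := by
    intro n
    have h := (hlogsum n).hasSum.rexp
    simp only [Function.comp_def] at h
    rw [show (fun k => 1 + a n k) = fun k => Real.exp (Real.log (1 + a n k)) from
      funext fun k => (Real.exp_log (by linarith [hapos n k])).symm]
    exact h
  have hP1 : ∀ n, 1 ≤ ∏' k, (1 + a n k) := by
    intro n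
    rw [(hprod n).tprod_eq]
    exact Real.one_le_exp (tsum_nonneg fun k =>
      Real.log_nonneg (by linarith [hapos n k]))
  have hPexp : ∀ n, ∏' k, (1 + a n k) ≤ Real.exp (5 / (-L n)) := by
    intro n
    rw [(hprod n).tprod_eq]
    apply Real.exp_le_exp.2
    calc ∑' k, Real.log (1 + a n k) ≤ ∑' k, a n k := by
          refine Summable.tsum_le_tsum (fun k => ?_) (hlogsum n) (hsum n)
          have h1 : (0:ℝ) < 1 + a n k := by linarith [hapos n k]
          have := Real.log_le_sub_one_of_pos h1
          linarith
      _ ≤ 5 / (-L n) := htsum n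
  -- lower and upper auxiliary functions
  set lo : ℤ → ℝ := fun n => (-(L n) / 4) / (1 - L n / 4) with hlo
  have hlopos : ∀ n, 0 < lo n := by
    intro n
    have h := hLneg n
    have h1 : (0:ℝ) < -(L n) / 4 := by linarith
    have h2 : (0:ℝ) < 1 - L n / 4 := by linarith
    exact div_pos h1 h2
  have hlo_eq : ∀ n, lo n = 1 + 4 / (L n - 4) := by
    intro n
    have h4 : L n - 4 ≠ 0 := by have := hLneg n; linarith
    have h4' : (1 : ℝ) - L n / 4 ≠ 0 := by have := hLneg n; intro h; linarith
    rw [hlo]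
    rw [div_eq_iff h4']
    field_simp [h4]
    ring
  have hlot : Tendsto lo atBot (nhds 1) := by
    have h1 : Tendsto (fun n : ℤ => 4 - L n) atBot atTop := by
      have := tendsto_atTop_add_const_right atBot (4:ℝ) (tendsto_neg_atBot_atTop.comp hLbot)
      exact this.congr fun n => by simp [Function.comp]; ring
    have h2' : Tendsto (fun n : ℤ => 4 / (4 - L n)) atBot (nhds 0) :=
      Filter.Tendsto.div_atTop tendsto_const_nhds h1
    have h2 : Tendsto (fun n : ℤ => 4 / (L n - 4)) atBot (nhds 0) := by
      have h3 := h2'.neg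
      rw [neg_zero] at h3
      exact h3.congr fun n => by rw [show L n - 4 = -(4 - L n) by ring, div_neg]
    have := h2.const_add 1
    rw [add_zero] at this
    simpa only [← hlo_eq] using this
  have hhit : Tendsto (fun n : ℤ => Real.exp (5 / (-L n)) * lo n) atBot (nhds 1) := by
    have h1 : Tendsto (fun n : ℤ => -L n) atBot atTop :=
      tendsto_neg_atBot_atTop.comp hLbot
    have h2 : Tendsto (fun n : ℤ => 5 / (-L n)) atBot (nhds 0) :=
      Filter.Tendsto.div_atTop tendsto_const_nhds h1
    have h3 : Tendsto (fun n : ℤ => Real.exp (5 / (-L n))) atBot (nhds 1) := by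
      have := (Real.continuous_exp.tendsto 0).comp h2
      simpa [Function.comp_def] using this
    simpa using h3.mul hlot
  -- squeeze
  refine tendsto_of_tendsto_of_tendsto_of_le_of_le hlot hhit (fun n => ?_) (fun n => ?_)
  · have hc : (0:ℝ) < 1 - L n / 4 := by have := hLneg n; linarith
    have hnum : (0:ℝ) ≤ -(L n) / 4 := by have := hLneg n; linarith
    rw [hlo]
    have key : -(L n) / 4 ≤ (-(L n) / 4) * ∏' k, (1 + a n k) := by
      calc -(L n) / 4 = (-(L n) / 4) * 1 := by ring
        _ ≤ (-(L n) / 4) * ∏' k, (1 + a n k) :=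
            mul_le_mul_of_nonneg_left (hP1 n) hnum
    exact div_le_div_of_nonneg_right key hc.le
  · have hc : (0:ℝ) < 1 - L n / 4 := by have := hLneg n; linarith
    have hnum : (0:ℝ) ≤ -(L n) / 4 := by have := hLneg n; linarith
    have h1 : (-(L n) / 4) * ∏' k, (1 + a n k) ≤
        (-(L n) / 4) * Real.exp (5 / (-L n)) :=
      mul_le_mul_of_nonneg_left (hPexp n) hnum
    calc ((-(L n) / 4) * ∏' k : ℕ, (1 + 4 / (2 - L (n - k)))) / (1 - L n / 4)
        ≤ ((-(L n) / 4) * Real.exp (5 / (-L n))) / (1 - L n / 4) :=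
          div_le_div_of_nonneg_right h1 hc.le
      _ = Real.exp (5 / (-L n)) * lo n := by rw [hlo]; ring
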